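/- Let 1 ≤ r ≤ k, let x : ℤ → ℤ be a bijection with x(i) = i for all i ≤ 0 and all i > n (so x permutes {1,…,n}), let u be an affine permutation, and let s be an integer such that: (i) for all 1 ≤ i < j ≤ n, u(i−s) < u(j−s) if and only if x⁻¹(i) < x⁻¹(j); and (ii) for all 1 ≤ i ≤ n, u(i−s) ≤ 0 if and only if x⁻¹(i) ≤ r. Let (a_1,b_1), …, (a_m,b_m) be pairs of integers with 1 ≤ a_j < b_j ≤ n, set x_0 = x and x_j = (a_j, b_j)·x_{j−1} (swapping the values a_j and b_j), and suppose every step is a cover in the r-Bruhat order, i.e. for each j: x_{j−1}⁻¹(a_j) ≤ r < x_{j−1}⁻¹(b_j) and ℓ(x_j) = ℓ(x_{j−1}) + 1, where ℓ(y) denotes the number of inversions of y, i.e. pairs 1 ≤ i < i' ≤ n with y(i) > y(i'). Then, setting u_0 = u and u_j = u_{j−1} ∘ t_{a_j − s, b_j − s}, the operator t_{a_j − s, b_j − s} is defined at u_{j−1} for every 1 ≤ j ≤ m (so the image chain is a nonzero path in the affine 0-Bruhat graph starting at u). -/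
import Mathlib


open Function

/-- The affine transposition `t_{a,b}` of period `n`: it exchanges `a + m*n` and
`b + m*n` for every `m : ℤ` and fixes all other integers. -/
def affT (n a b : ℤ) : ℤ → ℤ := fun i =>
  if (i - a) % n = 0 then i - a + b
  else if (i - b) % n = 0 then i - b + a
  else i

/-- `u` is an affine permutation of period `n`: a bijection of `ℤ` with
`u (i + n) = u i + n` and `∑_{i=1}^{n} u i = n (n+1) / 2`. -/
def IsAffinePerm (n : ℤ) (u : ℤ → ℤ) : Prop :=
  Function.Bijective u ∧ (∀ i : ℤ, u (i + n) = u i + n) ∧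
    ∑ i ∈ Finset.Icc (1 : ℤ) n, u i = n * (n + 1) / 2

/-- The operator `t_{a,b}` is defined at `u`:
`u a ≤ 0 < u b` and for every `a < i < b`, either `u i < u a` or `u i > u b`. -/
def DefinedAt (u : ℤ → ℤ) (a b : ℤ) : Prop :=
  u a ≤ 0 ∧ 0 < u b ∧ ∀ i : ℤ, a < i → i < b → u i < u a ∨ u b < u i

/-- `u` is 0-grassmannian: the positions of the values `1, 2, …, n` under `u`
appear in increasing order, i.e. `u⁻¹ 1 < u⁻¹ 2 < ⋯ < u⁻¹ n`. -/
def IsGrassmannian (n : ℤ) (u : ℤ → ℤ) : Prop :=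
  ∀ i j p q : ℤ, 1 ≤ i → i < j → j ≤ n → u p = i → u q = j → p < q

/-- The composite `u · t_{a,b} · t_{c,d}` is defined. -/
def Def2 (n : ℤ) (u : ℤ → ℤ) (a b c d : ℤ) : Prop :=
  DefinedAt u a b ∧ DefinedAt (u ∘ affT n a b) c d

/-- The composite `u · t_{a₁,b₁} · t_{a₂,b₂} · t_{a₃,b₃}` is defined. -/
def Def3 (n : ℤ) (u : ℤ → ℤ) (a₁ b₁ a₂ b₂ a₃ b₃ : ℤ) : Prop :=
  DefinedAt u a₁ b₁ ∧ DefinedAt (u ∘ affT n a₁ b₁) a₂ b₂ ∧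
    DefinedAt ((u ∘ affT n a₁ b₁) ∘ affT n a₂ b₂) a₃ b₃

/-- The number of inversions of a permutation of `{1, …, n}`: the number of pairs
`1 ≤ i < i' ≤ n` with `y i > y i'`. -/
noncomputable def finLen (n : ℤ) (y : ℤ → ℤ) : ℕ :=
  Set.ncard {p : ℤ × ℤ | 1 ≤ p.1 ∧ p.1 < p.2 ∧ p.2 ≤ n ∧ y p.2 < y p.1}

lemma emod_eq_zero_iff_small (n t : ℤ) (hn : 0 < n) (h1 : -n < t) (h2 : t < n) :
    t % n = 0 ↔ t = 0 := by
  constructor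
  · intro h
    obtain ⟨c, hc⟩ := Int.dvd_of_emod_eq_zero h
    have hc0 : c = 0 := by nlinarith [hc]
    simp [hc0] at hc; omega
  · rintro rfl; simp

lemma affT_invol (n a b : ℤ) (h : ¬ n ∣ (b - a)) : Involutive (affT n a b) := by
  intro i
  unfold affT
  by_cases h1 : (i - a) % n = 0
  · have hd1 : n ∣ (i - a) := Int.dvd_of_emod_eq_zero h1
    have h2 : (i - a + b - a) % n ≠ 0 := by
      intro hc
      have hd : n ∣ (i - a + b - a) := Int.dvd_of_emod_eq_zero hc
      have : n ∣ (b - a) := by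
        have h3 := hd.sub hd1
        have : i - a + b - a - (i - a) = b - a := by ring
        rwa [this] at h3
      exact h this
    have h3 : (i - a + b - b) % n = 0 := by simpa using h1
    simp only [h1, if_true, h2, if_false, h3]
    ring
  · by_cases h2 : (i - b) % n = 0
    · have h3 : (i - b + a - a) % n = 0 := by simpa using h2
      simp only [h1, if_false, h2, if_true, h3]
      ring
    · simp [h1, h2]

lemma affT_shift (n s a b i : ℤ) (hn : 0 < n) (ha : 1 ≤ a) (hb : b ≤ n) (hab : a < b)
    (hi1 : 1 ≤ i) (hi2 : i ≤ n) :
    affT n (a - s) (b - s) (i - s) = (Equiv.swap a b : ℤ → ℤ) i - s := by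
  have e1 : i - s - (a - s) = i - a := by ring
  have e2 : i - s - (b - s) = i - b := by ring
  have m1 : (i - a) % n = 0 ↔ i = a := by
    rw [emod_eq_zero_iff_small n _ hn (by omega) (by omega)]; omega
  have m2 : (i - b) % n = 0 ↔ i = b := by
    rw [emod_eq_zero_iff_small n _ hn (by omega) (by omega)]; omega
  unfold affT
  rw [e1, e2]
  by_cases h1 : i = a
  · subst h1
    rw [if_pos (m1.mpr rfl), Equiv.swap_apply_left]
    ring
  · by_cases h2 : i = b
    · subst h2
      rw [if_neg (by rw [m1]; omega), if_pos (m2.mpr rfl), Equiv.swap_apply_right]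
      ring
    · rw [if_neg (by rw [m1]; omega), if_neg (by rw [m2]; omega),
        Equiv.swap_apply_of_ne_of_ne h1 h2]

lemma boundary_apply (n : ℤ) (y : ℤ → ℤ) (hy : Function.Injective y)
    (h0 : ∀ i : ℤ, i ≤ 0 → y i = i) (hn : ∀ i : ℤ, n < i → y i = i) :
    ∀ i : ℤ, 1 ≤ i → i ≤ n → 1 ≤ y i ∧ y i ≤ n := by
  intro i hi1 hi2
  constructor
  · by_contra h
    push_neg at h
    have := h0 (y i) (by omega)
    have := hy this
    omega
  · by_contra h
    push_neg at h
    have := hn (y i) h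
    have := hy this
    omega

lemma boundary_invFun (n : ℤ) (y : ℤ → ℤ) (hy : Function.Bijective y)
    (h0 : ∀ i : ℤ, i ≤ 0 → y i = i) (hn : ∀ i : ℤ, n < i → y i = i) :
    ∀ i : ℤ, 1 ≤ i → i ≤ n → 1 ≤ invFun y i ∧ invFun y i ≤ n := by
  intro i hi1 hi2
  have hiv : y (invFun y i) = i := Function.invFun_eq (hy.surjective i)
  constructor
  · by_contra h
    push_neg at h
    rw [h0 _ (by omega)] at hiv
    omega
  · by_contra h
    push_neg at h
    rw [hn _ (by omega)] at hiv
    omega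

lemma invFun_comp_swap (a b : ℤ) (y : ℤ → ℤ) (hy : Function.Bijective y) (i : ℤ) :
    invFun ((Equiv.swap a b : ℤ → ℤ) ∘ y) i = invFun y ((Equiv.swap a b : ℤ → ℤ) i) := by
  have hy' : Function.Bijective ((Equiv.swap a b : ℤ → ℤ) ∘ y) :=
    (Equiv.swap a b).bijective.comp hy
  apply hy'.injective
  rw [Function.invFun_eq (hy'.surjective i)]
  symm
  show (Equiv.swap a b : ℤ → ℤ) (y (invFun y ((Equiv.swap a b : ℤ → ℤ) i))) = i
  rw [Function.invFun_eq (hy.surjective _), Equiv.swap_apply_self]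


lemma invSet_finite (n : ℤ) (y : ℤ → ℤ) :
    {p : ℤ × ℤ | 1 ≤ p.1 ∧ p.1 < p.2 ∧ p.2 ≤ n ∧ y p.2 < y p.1}.Finite := by
  apply Set.Finite.subset (Set.finite_Icc ((1 : ℤ), (1 : ℤ)) (n, n))
  rintro ⟨i, j⟩ ⟨h1, h2, h3, -⟩
  simp only [Set.mem_Icc, Prod.mk_le_mk]
  omega

def phi (y : ℤ → ℤ) (p q a b : ℤ) (P : ℤ × ℤ) : ℤ × ℤ :=
  if P.2 = p ∧ a < y P.1 ∧ y P.1 < b then (P.1, q)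
  else if P.1 = q ∧ a < y P.2 ∧ y P.2 < b then (p, P.2)
  else P

lemma key (n : ℤ) (y : ℤ → ℤ) (hy : Function.Bijective y) (p q : ℤ)
    (hpq : p < q) (hp : 1 ≤ p) (hq : q ≤ n)
    (hab : y p < y q)
    (h : finLen n ((Equiv.swap (y p) (y q) : ℤ → ℤ) ∘ y) = finLen n y + 1) :
    ∀ i : ℤ, p < i → i < q → y i < y p ∨ y q < y i := by
  by_contra hcon
  push_neg at hcon
  obtain ⟨m, hpm, hmq, hma, hmb⟩ := hcon
  have hinj := hy.injective
  set a := y p with hap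
  set b := y q with hbq
  set y' := (Equiv.swap a b : ℤ → ℤ) ∘ y with hy'def
  have hmp : m ≠ p := by omega
  have hmq2 : m ≠ q := by omega
  have hva : ∀ t : ℤ, t ≠ p → y t ≠ a := fun t ht hh => ht (hinj hh)
  have hvb : ∀ t : ℤ, t ≠ q → y t ≠ b := fun t ht hh => ht (hinj hh)
  have hma' : a < y m := lt_of_le_of_ne hma (fun hh => hva m hmp hh.symm)
  have hmb' : y m < b := lt_of_le_of_ne hmb (hvb m hmq2)
  have hy'p : y' p = b := by
    show (Equiv.swap a b : ℤ → ℤ) (y p) = b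
    rw [← hap, Equiv.swap_apply_left]
  have hy'q : y' q = a := by
    show (Equiv.swap a b : ℤ → ℤ) (y q) = a
    rw [← hbq, Equiv.swap_apply_right]
  have hy't : ∀ t : ℤ, y t ≠ a → y t ≠ b → y' t = y t := fun t h1 h2 => by
    show (Equiv.swap a b : ℤ → ℤ) (y t) = y t
    rw [Equiv.swap_apply_of_ne_of_ne h1 h2]
  set I : Set (ℤ × ℤ) := {P : ℤ × ℤ | 1 ≤ P.1 ∧ P.1 < P.2 ∧ P.2 ≤ n ∧ y P.2 < y P.1}
    with hIdef
  set I' : Set (ℤ × ℤ) := {P : ℤ × ℤ | 1 ≤ P.1 ∧ P.1 < P.2 ∧ P.2 ≤ n ∧ y' P.2 < y' P.1}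
    with hI'def
  set E : Set (ℤ × ℤ) := {(p, q), (p, m), (m, q)} with hEdef
  have hmemE : ∀ P : ℤ × ℤ, P ∈ E ↔ P = (p, q) ∨ P = (p, m) ∨ P = (m, q) := by
    intro P; simp [hEdef]
  have hmemI : ∀ P : ℤ × ℤ, P ∈ I ↔ 1 ≤ P.1 ∧ P.1 < P.2 ∧ P.2 ≤ n ∧ y P.2 < y P.1 := by
    intro P; rfl
  have hmemI' : ∀ P : ℤ × ℤ, P ∈ I' ↔ 1 ≤ P.1 ∧ P.1 < P.2 ∧ P.2 ≤ n ∧ y' P.2 < y' P.1 := by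
    intro P; rfl
  -- E is disjoint from I
  have hEnotI : ∀ P ∈ E, P ∉ I := by
    intro P hP hPI
    rw [hmemE] at hP
    rw [hmemI] at hPI
    rcases hP with rfl | rfl | rfl
    · simp at hPI; omega
    · simp at hPI; omega
    · simp at hPI; omega
  -- branch analysis helpers
  have hC1 : ∀ P : ℤ × ℤ, P ∈ I ∪ E → (P.2 = p ∧ a < y P.1 ∧ y P.1 < b) →
      P ∈ I ∧ P.1 < p := by
    rintro P hP ⟨e, h1, h2⟩
    rcases hP with hP | hP
    · refine ⟨hP, ?_⟩
      rw [hmemI] at hP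
      omega
    · rw [hmemE] at hP
      exfalso
      rcases hP with rfl | rfl | rfl <;> simp at e <;> omega
  have hC2 : ∀ P : ℤ × ℤ, P ∈ I ∪ E → (P.1 = q ∧ a < y P.2 ∧ y P.2 < b) →
      P ∈ I ∧ q < P.2 := by
    rintro P hP ⟨e, h1, h2⟩
    rcases hP with hP | hP
    · refine ⟨hP, ?_⟩
      rw [hmemI] at hP
      omega
    · rw [hmemE] at hP
      exfalso
      rcases hP with rfl | rfl | rfl <;> simp at e <;> omega
  -- phi maps I ∪ E into I'
  have hmaps : ∀ P, P ∈ I ∪ E → phi y p q a b P ∈ I' := by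
    intro P hP
    by_cases c1 : P.2 = p ∧ a < y P.1 ∧ y P.1 < b
    · obtain ⟨hPI, hP1p⟩ := hC1 P hP c1
      rw [hmemI] at hPI
      obtain ⟨g1, g2, g3, g4⟩ := hPI
      obtain ⟨e, d1, d2⟩ := c1
      have : phi y p q a b P = (P.1, q) := if_pos ⟨e, d1, d2⟩
      rw [this, hmemI']
      refine ⟨g1, by omega, hq, ?_⟩
      have h5 : y' P.1 = y P.1 := hy't _ (by omega) (by omega)
      simp only [h5, hy'q]
      omega
    · by_cases c2 : P.1 = q ∧ a < y P.2 ∧ y P.2 < b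
      · obtain ⟨hPI, hP2q⟩ := hC2 P hP c2
        rw [hmemI] at hPI
        obtain ⟨g1, g2, g3, g4⟩ := hPI
        obtain ⟨e, d1, d2⟩ := c2
        have : phi y p q a b P = (p, P.2) := by
          unfold phi
          rw [if_neg c1, if_pos ⟨e, d1, d2⟩]
        rw [this, hmemI']
        refine ⟨hp, by omega, by omega, ?_⟩
        have h5 : y' P.2 = y P.2 := hy't _ (by omega) (by omega)
        simp only [h5, hy'p]
        omega
      · have hid : phi y p q a b P = P := by
          unfold phi
          rw [if_neg c1, if_neg c2]
        rw [hid, hmemI']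
        rcases hP with hPI | hPE
        · rw [hmemI] at hPI
          obtain ⟨g1, g2, g3, g4⟩ := hPI
          refine ⟨g1, g2, g3, ?_⟩
          -- analyze whether P.1, P.2 ∈ {p, q}
          by_cases e1 : P.1 = p
          · -- y P.1 = a, so y P.2 < a
            have hv2 : y P.2 < a := by rw [hap, ← e1]; exact g4
            have h5 : y' P.2 = y P.2 := hy't _ (by omega) (by omega)
            rw [h5, e1, hy'p]
            omega
          · by_cases e2 : P.1 = q
            · -- y P.1 = b; ¬c2 gives y P.2 < a
              have hv2b : y P.2 < b := by rw [hbq, ← e2]; exact g4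
              have hP2p : P.2 ≠ p := by omega
              have hv2a : y P.2 ≠ a := hva _ hP2p
              have hv2 : y P.2 < a := by
                rcases lt_or_gt_of_ne hv2a with hlt | hgt
                · exact hlt
                · exact absurd ⟨e2, hgt, hv2b⟩ c2
              have h5 : y' P.2 = y P.2 := hy't _ hv2a (by omega)
              rw [h5, e2, hy'q]
              omega
            · -- P.1 ∉ {p,q}, so y P.1 ∉ {a,b}
              have hv1a : y P.1 ≠ a := hva _ e1
              have hv1b : y P.1 ≠ b := hvb _ e2
              have h5 : y' P.1 = y P.1 := hy't _ hv1a hv1b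
              by_cases f1 : P.2 = p
              · -- y P.2 = a, ¬c1 gives y P.1 > b
                have hv2 : y P.2 = a := by rw [f1]
                have hv1 : b < y P.1 := by
                  have : a < y P.1 := by omega
                  rcases lt_or_gt_of_ne hv1b with hlt | hgt
                  · exact absurd ⟨f1, this, hlt⟩ c1
                  · exact hgt
                rw [h5, f1, hy'p]
                omega
              · by_cases f2 : P.2 = q
                · have hv2 : y P.2 = b := by rw [f2]
                  rw [h5, f2, hy'q]
                  omega
                · have hv2a : y P.2 ≠ a := hva _ f1
                  have hv2b : y P.2 ≠ b := hvb _ f2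
                  have h6 : y' P.2 = y P.2 := hy't _ hv2a hv2b
                  rw [h5, h6]
                  exact g4
        · rw [hmemE] at hPE
          rcases hPE with rfl | rfl | rfl
          · simp only
            refine ⟨hp, hpq, hq, ?_⟩
            rw [hy'p, hy'q]; omega
          · simp only
            refine ⟨hp, hpm, by omega, ?_⟩
            rw [hy'p, hy't m (by omega) (by omega)]; omega
          · simp only
            refine ⟨by omega, hmq, hq, ?_⟩
            rw [hy'q, hy't m (by omega) (by omega)]; omega
  -- injectivity
  have hinjOn : Set.InjOn (phi y p q a b) (I ∪ E) := by
    intro P hP P' hP' heq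
    by_cases c1 : P.2 = p ∧ a < y P.1 ∧ y P.1 < b
    all_goals by_cases c1' : P'.2 = p ∧ a < y P'.1 ∧ y P'.1 < b
    · -- both branch 1
      obtain ⟨hPI, hlt⟩ := hC1 P hP c1
      obtain ⟨hPI', hlt'⟩ := hC1 P' hP' c1'
      have e1 : phi y p q a b P = (P.1, q) := if_pos c1
      have e2 : phi y p q a b P' = (P'.1, q) := if_pos c1'
      rw [e1, e2] at heq
      have : P.1 = P'.1 := (Prod.ext_iff.mp heq).1
      have : P = P' := Prod.ext this (c1.1.trans c1'.1.symm)
      exact this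
    · -- P branch 1, P' not
      obtain ⟨hPI, hlt⟩ := hC1 P hP c1
      have e1 : phi y p q a b P = (P.1, q) := if_pos c1
      by_cases c2' : P'.1 = q ∧ a < y P'.2 ∧ y P'.2 < b
      · obtain ⟨hPI', hgt'⟩ := hC2 P' hP' c2'
        have e2 : phi y p q a b P' = (p, P'.2) := by
          unfold phi; rw [if_neg c1', if_pos c2']
        rw [e1, e2] at heq
        have hh1 : P.1 = p := (Prod.ext_iff.mp heq).1
        exfalso
        have := c1.2.1
        rw [hh1, ← hap] at this
        omega
      · have e2 : phi y p q a b P' = P' := by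
          unfold phi; rw [if_neg c1', if_neg c2']
        rw [e1, e2] at heq
        -- P' = (P.1, q)
        exfalso
        rcases hP' with hPI' | hPE'
        · rw [hmemI] at hPI'
          have h1 : P'.2 = q := by rw [← heq]
          have h2 : P'.1 = P.1 := by rw [← heq]
          have := hPI'.2.2.2
          rw [h1, h2, ← hbq] at this
          have := c1.2.2
          omega
        · rw [hmemE] at hPE'
          rcases hPE' with rfl | rfl | rfl
          · have h2 : p = P.1 := ((Prod.ext_iff.mp heq).1).symm
            have := c1.2.1
            rw [← h2, ← hap] at this
            omega
          · have h1 : m = q := ((Prod.ext_iff.mp heq).2).symm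
            omega
          · have h2 : m = P.1 := ((Prod.ext_iff.mp heq).1).symm
            rw [hmemI] at hPI
            have : P.1 < P.2 := hPI.2.1
            have : P.2 = p := c1.1
            omega
    · -- P' branch 1, P not : symmetric
      obtain ⟨hPI', hlt'⟩ := hC1 P' hP' c1'
      have e2 : phi y p q a b P' = (P'.1, q) := if_pos c1'
      by_cases c2 : P.1 = q ∧ a < y P.2 ∧ y P.2 < b
      · obtain ⟨hPI, hgt⟩ := hC2 P hP c2
        have e1 : phi y p q a b P = (p, P.2) := by
          unfold phi; rw [if_neg c1, if_pos c2]
        rw [e1, e2] at heq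
        have hh1 : P'.1 = p := ((Prod.ext_iff.mp heq).1).symm
        exfalso
        have := c1'.2.1
        rw [hh1, ← hap] at this
        omega
      · have e1 : phi y p q a b P = P := by
          unfold phi; rw [if_neg c1, if_neg c2]
        rw [e1, e2] at heq
        exfalso
        rcases hP with hPI | hPE
        · rw [hmemI] at hPI
          have h1 : P.2 = q := by rw [heq]
          have h2 : P.1 = P'.1 := by rw [heq]
          have := hPI.2.2.2
          rw [h1, h2, ← hbq] at this
          have := c1'.2.2
          omega
        · rw [hmemE] at hPE
          rcases hPE with rfl | rfl | rfl
          · have h2 : p = P'.1 := (Prod.ext_iff.mp heq).1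
            have := c1'.2.1
            rw [← h2, ← hap] at this
            omega
          · have h1 : m = q := (Prod.ext_iff.mp heq).2
            omega
          · have h2 : m = P'.1 := (Prod.ext_iff.mp heq).1
            rw [hmemI] at hPI'
            have : P'.1 < P'.2 := hPI'.2.1
            have : P'.2 = p := c1'.1
            omega
    · -- neither in branch 1
      by_cases c2 : P.1 = q ∧ a < y P.2 ∧ y P.2 < b
      all_goals by_cases c2' : P'.1 = q ∧ a < y P'.2 ∧ y P'.2 < b
      · obtain ⟨hPI, hgt⟩ := hC2 P hP c2
        obtain ⟨hPI', hgt'⟩ := hC2 P' hP' c2'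
        have e1 : phi y p q a b P = (p, P.2) := by
          unfold phi; rw [if_neg c1, if_pos c2]
        have e2 : phi y p q a b P' = (p, P'.2) := by
          unfold phi; rw [if_neg c1', if_pos c2']
        rw [e1, e2] at heq
        have : P.2 = P'.2 := (Prod.ext_iff.mp heq).2
        exact Prod.ext (c2.1.trans c2'.1.symm) this
      · -- P branch 2, P' identity
        obtain ⟨hPI, hgt⟩ := hC2 P hP c2
        have e1 : phi y p q a b P = (p, P.2) := by
          unfold phi; rw [if_neg c1, if_pos c2]
        have e2 : phi y p q a b P' = P' := by
          unfold phi; rw [if_neg c1', if_neg c2']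
        rw [e1, e2] at heq
        exfalso
        rcases hP' with hPI' | hPE'
        · rw [hmemI] at hPI'
          have h1 : P'.1 = p := by rw [← heq]
          have h2 : P'.2 = P.2 := by rw [← heq]
          have := hPI'.2.2.2
          rw [h1, h2, ← hap] at this
          have := c2.2.1
          omega
        · rw [hmemE] at hPE'
          rcases hPE' with rfl | rfl | rfl
          · have h2 : q = P.2 := ((Prod.ext_iff.mp heq).2).symm
            omega
          · have h2 : m = P.2 := ((Prod.ext_iff.mp heq).2).symm
            omega
          · have h1 : m = p := ((Prod.ext_iff.mp heq).1).symm
            omega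
      · -- P identity, P' branch 2
        obtain ⟨hPI', hgt'⟩ := hC2 P' hP' c2'
        have e2 : phi y p q a b P' = (p, P'.2) := by
          unfold phi; rw [if_neg c1', if_pos c2']
        have e1 : phi y p q a b P = P := by
          unfold phi; rw [if_neg c1, if_neg c2]
        rw [e1, e2] at heq
        exfalso
        rcases hP with hPI | hPE
        · rw [hmemI] at hPI
          have h1 : P.1 = p := by rw [heq]
          have h2 : P.2 = P'.2 := by rw [heq]
          have := hPI.2.2.2
          rw [h1, h2, ← hap] at this
          have := c2'.2.1
          omega
        · rw [hmemE] at hPE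
          rcases hPE with rfl | rfl | rfl
          · have h2 : q = P'.2 := (Prod.ext_iff.mp heq).2
            omega
          · have h2 : m = P'.2 := (Prod.ext_iff.mp heq).2
            omega
          · have h1 : m = p := (Prod.ext_iff.mp heq).1
            omega
      · have e1 : phi y p q a b P = P := by
          unfold phi; rw [if_neg c1, if_neg c2]
        have e2 : phi y p q a b P' = P' := by
          unfold phi; rw [if_neg c1', if_neg c2']
        rw [e1, e2] at heq
        exact heq
  -- counting
  have hIfin : I.Finite := invSet_finite n y
  have hI'fin : I'.Finite := invSet_finite n y'
  have hEfin : E.Finite := (Set.finite_singleton _).insert _ |>.insert _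
  have hdisj : Disjoint I E := by
    rw [Set.disjoint_right]
    intro P hPE hPI
    exact hEnotI P hPE hPI
  have himg : phi y p q a b '' (I ∪ E) ⊆ I' := by
    rintro _ ⟨P, hP, rfl⟩
    exact hmaps P hP
  have hu : (I ∪ E).ncard = I.ncard + E.ncard :=
    Set.ncard_union_eq hdisj hIfin hEfin
  have hE3 : E.ncard = 3 := by
    rw [hEdef]
    rw [Set.ncard_insert_of_notMem (by simp [Prod.ext_iff]; omega),
      Set.ncard_insert_of_notMem (by simp [Prod.ext_iff]; omega),
      Set.ncard_singleton]
  have h2 : (phi y p q a b '' (I ∪ E)).ncard = (I ∪ E).ncard :=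
    Set.ncard_image_of_injOn hinjOn
  have h3 : (phi y p q a b '' (I ∪ E)).ncard ≤ I'.ncard :=
    Set.ncard_le_ncard himg hI'fin
  have hL : I'.ncard = I.ncard + 1 := h
  omega

lemma ordsym (n s : ℤ) (y v : ℤ → ℤ) (hy : Function.Bijective y) (hv : Function.Bijective v)
    (hord : ∀ i i' : ℤ, 1 ≤ i → i < i' → i' ≤ n →
      (v (i - s) < v (i' - s) ↔ invFun y i < invFun y i')) :
    ∀ i i' : ℤ, 1 ≤ i → i ≤ n → 1 ≤ i' → i' ≤ n → i ≠ i' →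
      (v (i - s) < v (i' - s) ↔ invFun y i < invFun y i') := by
  intro i i' h1 h2 h3 h4 h5
  have hne1 : v (i - s) ≠ v (i' - s) := by
    intro hh
    have := hv.injective hh
    omega
  have hne2 : invFun y i ≠ invFun y i' := by
    intro hh
    have := congrArg y hh
    rw [Function.invFun_eq (hy.surjective i), Function.invFun_eq (hy.surjective i')] at this
    omega
  rcases lt_or_gt_of_ne h5 with hlt | hgt
  · exact hord i i' h1 hlt h4
  · have h := hord i' i h3 hgt h2
    constructor
    · intro hh
      rcases lt_or_gt_of_ne hne2 with hl | hg
      · exact hl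
      · exact absurd (h.mpr hg) (by omega)
    · intro hh
      rcases lt_or_gt_of_ne hne1 with hl | hg
      · exact hl
      · exact absurd (h.mp hg) (by omega)

lemma stepDefined (n r s a b : ℤ) (hn : 2 ≤ n) (ha : 1 ≤ a) (hab : a < b) (hb : b ≤ n)
    (y v : ℤ → ℤ) (hy : Function.Bijective y) (hv : Function.Bijective v)
    (hy0 : ∀ i : ℤ, i ≤ 0 → y i = i) (hyn : ∀ i : ℤ, n < i → y i = i)
    (hord : ∀ i i' : ℤ, 1 ≤ i → i < i' → i' ≤ n →
      (v (i - s) < v (i' - s) ↔ invFun y i < invFun y i'))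
    (hsgn : ∀ i : ℤ, 1 ≤ i → i ≤ n → (v (i - s) ≤ 0 ↔ invFun y i ≤ r))
    (hc1 : invFun y a ≤ r) (hc2 : r < invFun y b)
    (hlen : finLen n ((Equiv.swap a b : ℤ → ℤ) ∘ y) = finLen n y + 1) :
    DefinedAt v (a - s) (b - s) := by
  have hos := ordsym n s y v hy hv hord
  set p := invFun y a with hpdef
  set q := invFun y b with hqdef
  have hyp : y p = a := Function.invFun_eq (hy.surjective a)
  have hyq : y q = b := Function.invFun_eq (hy.surjective b)
  have hpb := boundary_invFun n y hy hy0 hyn a ha (by omega)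
  have hqb := boundary_invFun n y hy hy0 hyn b (by omega) hb
  have hpq : p < q := by omega
  have hkey := key n y hy p q hpq hpb.1 hqb.2 (by rw [hyp, hyq]; exact hab)
    (by rw [hyp, hyq]; exact hlen)
  refine ⟨(hsgn a ha (by omega)).mpr hc1, ?_, ?_⟩
  · by_contra hc
    push_neg at hc
    have := (hsgn b (by omega) hb).mp hc
    omega
  · intro c hca hcb
    set j := c + s with hjdef
    have hcj : c = j - s := by omega
    have hja : a < j := by omega
    have hjb : j < b := by omega
    set w := invFun y j with hwdef
    have hyw : y w = j := Function.invFun_eq (hy.surjective j)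
    have hwp : w ≠ p := by
      intro hh; rw [hh, hyp] at hyw; omega
    have hwq : w ≠ q := by
      intro hh; rw [hh, hyq] at hyw; omega
    have hwout : w < p ∨ q < w := by
      by_contra hcon
      push_neg at hcon
      have := hkey w (by omega) (by omega)
      rw [hyp, hyq, hyw] at this
      omega
    rcases hwout with hl | hr
    · left
      rw [hcj]
      exact (hos j a (by omega) (by omega) ha (by omega) (by omega)).mpr (by omega)
    · right
      rw [hcj]
      exact (hos b j (by omega) hb (by omega) (by omega) (by omega)).mpr (by omega)

lemma stepInv (n r s a b : ℤ) (hn : 2 ≤ n) (ha : 1 ≤ a) (hab : a < b) (hb : b ≤ n)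
    (y v : ℤ → ℤ) (hy : Function.Bijective y) (hv : Function.Bijective v)
    (hy0 : ∀ i : ℤ, i ≤ 0 → y i = i) (hyn : ∀ i : ℤ, n < i → y i = i)
    (hord : ∀ i i' : ℤ, 1 ≤ i → i < i' → i' ≤ n →
      (v (i - s) < v (i' - s) ↔ invFun y i < invFun y i'))
    (hsgn : ∀ i : ℤ, 1 ≤ i → i ≤ n → (v (i - s) ≤ 0 ↔ invFun y i ≤ r)) :
    Function.Bijective ((Equiv.swap a b : ℤ → ℤ) ∘ y) ∧
    (∀ i : ℤ, i ≤ 0 → ((Equiv.swap a b : ℤ → ℤ) ∘ y) i = i) ∧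
    (∀ i : ℤ, n < i → ((Equiv.swap a b : ℤ → ℤ) ∘ y) i = i) ∧
    Function.Bijective (v ∘ affT n (a - s) (b - s)) ∧
    (∀ i i' : ℤ, 1 ≤ i → i < i' → i' ≤ n →
      ((v ∘ affT n (a - s) (b - s)) (i - s) < (v ∘ affT n (a - s) (b - s)) (i' - s) ↔
        invFun ((Equiv.swap a b : ℤ → ℤ) ∘ y) i < invFun ((Equiv.swap a b : ℤ → ℤ) ∘ y) i')) ∧
    (∀ i : ℤ, 1 ≤ i → i ≤ n →
      ((v ∘ affT n (a - s) (b - s)) (i - s) ≤ 0 ↔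
        invFun ((Equiv.swap a b : ℤ → ℤ) ∘ y) i ≤ r)) := by
  have hos := ordsym n s y v hy hv hord
  have hndvd : ¬ n ∣ (b - s - (a - s)) := by
    intro hd
    have he : (b - s - (a - s)) % n = 0 := Int.emod_eq_zero_of_dvd hd
    rw [emod_eq_zero_iff_small n _ (by omega) (by omega) (by omega)] at he
    omega
  have hT := affT_invol n (a - s) (b - s) hndvd
  have hTb : Function.Bijective (affT n (a - s) (b - s)) := hT.bijective
  have hσmem : ∀ i : ℤ, 1 ≤ i → i ≤ n →
      1 ≤ (Equiv.swap a b : ℤ → ℤ) i ∧ (Equiv.swap a b : ℤ → ℤ) i ≤ n := by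
    intro i h1 h2
    rw [Equiv.swap_apply_def]
    split_ifs <;> omega
  have hshift : ∀ i : ℤ, 1 ≤ i → i ≤ n →
      (v ∘ affT n (a - s) (b - s)) (i - s) = v ((Equiv.swap a b : ℤ → ℤ) i - s) := by
    intro i h1 h2
    show v (affT n (a - s) (b - s) (i - s)) = _
    rw [affT_shift n s a b i (by omega) ha hb hab h1 h2]
  have hIv : ∀ i : ℤ, invFun ((Equiv.swap a b : ℤ → ℤ) ∘ y) i
      = invFun y ((Equiv.swap a b : ℤ → ℤ) i) := invFun_comp_swap a b y hy
  refine ⟨(Equiv.swap a b).bijective.comp hy, ?_, ?_, hv.comp hTb, ?_, ?_⟩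
  · intro i hi
    show (Equiv.swap a b : ℤ → ℤ) (y i) = i
    rw [hy0 i hi, Equiv.swap_apply_of_ne_of_ne (by omega) (by omega)]
  · intro i hi
    show (Equiv.swap a b : ℤ → ℤ) (y i) = i
    rw [hyn i hi, Equiv.swap_apply_of_ne_of_ne (by omega) (by omega)]
  · intro i i' h1 h2 h3
    rw [hshift i (by omega) (by omega), hshift i' (by omega) h3, hIv, hIv]
    have m1 := hσmem i (by omega) (by omega)
    have m2 := hσmem i' (by omega) h3
    exact hos _ _ m1.1 m1.2 m2.1 m2.2
      (fun hh => by have := (Equiv.swap a b).injective hh; omega)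
  · intro i h1 h2
    rw [hshift i h1 h2, hIv]
    have m1 := hσmem i h1 h2
    exact hsgn _ m1.1 m1.2

theorem stmt19 (k : ℤ) (hk : 1 ≤ k) (r : ℤ) (hr1 : 1 ≤ r) (hrk : r ≤ k)
    (x : ℤ → ℤ) (hx : Function.Bijective x)
    (hx0 : ∀ i : ℤ, i ≤ 0 → x i = i) (hxn : ∀ i : ℤ, k + 1 < i → x i = i)
    (u : ℤ → ℤ) (hu : IsAffinePerm (k + 1) u) (s : ℤ)
    (hord : ∀ i j : ℤ, 1 ≤ i → i < j → j ≤ k + 1 →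
      (u (i - s) < u (j - s) ↔ Function.invFun x i < Function.invFun x j))
    (hsgn : ∀ i : ℤ, 1 ≤ i → i ≤ k + 1 →
      (u (i - s) ≤ 0 ↔ Function.invFun x i ≤ r))
    (m : ℕ) (A B : ℕ → ℤ)
    (hAB : ∀ j < m, 1 ≤ A j ∧ A j < B j ∧ B j ≤ k + 1)
    (xs : ℕ → ℤ → ℤ) (hxs0 : xs 0 = x)
    (hxsrec : ∀ j < m, xs (j + 1) = (Equiv.swap (A j) (B j) : ℤ → ℤ) ∘ xs j)
    (hcov : ∀ j < m,
      Function.invFun (xs j) (A j) ≤ r ∧ r < Function.invFun (xs j) (B j) ∧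
        finLen (k + 1) (xs (j + 1)) = finLen (k + 1) (xs j) + 1)
    (us : ℕ → ℤ → ℤ) (hus0 : us 0 = u)
    (husrec : ∀ j < m, us (j + 1) = us j ∘ affT (k + 1) (A j - s) (B j - s)) :
    ∀ j < m, DefinedAt (us j) (A j - s) (B j - s) := by
  have hn2 : (2 : ℤ) ≤ k + 1 := by omega
  have hmain : ∀ j : ℕ, j ≤ m →
      Function.Bijective (xs j) ∧ (∀ i : ℤ, i ≤ 0 → xs j i = i) ∧
      (∀ i : ℤ, k + 1 < i → xs j i = i) ∧ Function.Bijective (us j) ∧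
      (∀ i i' : ℤ, 1 ≤ i → i < i' → i' ≤ k + 1 →
        (us j (i - s) < us j (i' - s) ↔ invFun (xs j) i < invFun (xs j) i')) ∧
      (∀ i : ℤ, 1 ≤ i → i ≤ k + 1 → (us j (i - s) ≤ 0 ↔ invFun (xs j) i ≤ r)) := by
    intro j
    induction j with
    | zero =>
      intro _
      rw [hxs0, hus0]
      exact ⟨hx, hx0, hxn, hu.1, hord, hsgn⟩
    | succ j ih =>
      intro hj
      have hjm : j < m := hj
      obtain ⟨b1, b2, b3, b4, b5, b6⟩ := ih (le_of_lt hjm)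
      obtain ⟨hA1, hA2, hA3⟩ := hAB j hjm
      rw [hxsrec j hjm, husrec j hjm]
      exact stepInv (k + 1) r s (A j) (B j) hn2 hA1 hA2 hA3 (xs j) (us j)
        b1 b4 b2 b3 b5 b6
  intro j hj
  obtain ⟨b1, b2, b3, b4, b5, b6⟩ := hmain j (le_of_lt hj)
  obtain ⟨hA1, hA2, hA3⟩ := hAB j hj
  obtain ⟨hc1, hc2, hc3⟩ := hcov j hj
  rw [hxsrec j hj] at hc3
  exact stepDefined (k + 1) r s (A j) (B j) hn2 hA1 hA2 hA3 (xs j) (us j)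
    b1 b4 b2 b3 b5 b6 hc1 hc2 hc3
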